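/- Work in the Clifford algebra Cl(4,1) of ℝ⁵ with the quadratic form Q(x) = x₁² + x₂² + x₃² + x₄² − x₅², with the conformal embedding F(x) = |x|²·ι(n) + 2λ·ι(x) − λ²·ι(n̄) of ℝ³ for a fixed real λ ≠ 0. For a ∈ ℝ³ define the translation rotor T_a = 1 + (2λ)⁻¹·ι(n)·ι(a); its reverse is T̃_a = 1 − (2λ)⁻¹·ι(n)·ι(a). Then for all a, x ∈ ℝ³, one has T_a · F(x) · T̃_a = F(x + a); that is, the translation x ↦ x + a of ℝ³ is implemented multiplicatively by the rotor T_a on conformal representatives. -/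

import Mathlib

noncomputable section

/-- The quadratic form of signature `(4,1)` on ℝ⁵:
`Q(x) = x₁² + x₂² + x₃² + x₄² − x₅²`. -/
def Q41 : QuadraticForm ℝ (Fin 5 → ℝ) :=
  QuadraticMap.weightedSumSquares ℝ (![1, 1, 1, 1, -1] : Fin 5 → ℝ)

/-- The conformal Clifford algebra `Cl(4,1)`. -/
abbrev Cl41 : Type := CliffordAlgebra Q41

/-- The canonical embedding `ι : ℝ⁵ → Cl(4,1)`, satisfying `ι(v)² = Q(v)·1`. -/
def ι41 : (Fin 5 → ℝ) →ₗ[ℝ] Cl41 := CliffordAlgebra.ι Q41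

/-- The embedding of ℝ³ into ℝ⁵ as the first three coordinates. -/
def emb3 (x : Fin 3 → ℝ) : Fin 5 → ℝ := ![x 0, x 1, x 2, 0, 0]

/-- The null vector `n = e₄ + e₅`. -/
def nVec : Fin 5 → ℝ := ![0, 0, 0, 1, 1]

/-- The null vector `n̄ = e₄ − e₅`. -/
def nBar : Fin 5 → ℝ := ![0, 0, 0, 1, -1]

/-- The conformal embedding `F(x) = |x|²·ι(n) + 2λ·ι(x) − λ²·ι(n̄)` of ℝ³
into the null cone of `Cl(4,1)`, for a fixed scale `lam = λ`. -/
def confF (lam : ℝ) (x : Fin 3 → ℝ) : Cl41 :=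
  (∑ i, x i ^ 2) • ι41 nVec + (2 * lam) • ι41 (emb3 x) - lam ^ 2 • ι41 nBar

/-- The translation rotor `T_a = 1 + (2λ)⁻¹·ι(n)·ι(a)`. -/
def transRotor (lam : ℝ) (a : Fin 3 → ℝ) : Cl41 :=
  1 + (2 * lam)⁻¹ • (ι41 nVec * ι41 (emb3 a))

/-- The reverse `T̃_a = 1 − (2λ)⁻¹·ι(n)·ι(a)` of the translation rotor. -/
def transRotorRev (lam : ℝ) (a : Fin 3 → ℝ) : Cl41 :=
  1 - (2 * lam)⁻¹ • (ι41 nVec * ι41 (emb3 a))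

lemma Q41_apply (v : Fin 5 → ℝ) : Q41 v = v 0^2 + v 1^2 + v 2^2 + v 3^2 - v 4^2 := by
  simp [Q41, QuadraticMap.weightedSumSquares_apply, Fin.sum_univ_five]; ring

lemma polar41 (u v : Fin 5 → ℝ) : QuadraticMap.polar Q41 u v =
    2*(u 0 * v 0 + u 1 * v 1 + u 2 * v 2 + u 3 * v 3 - u 4 * v 4) := by
  simp [QuadraticMap.polar, Q41_apply]; ring

lemma ι_sq (v : Fin 5 → ℝ) : ι41 v * ι41 v = algebraMap ℝ Cl41 (Q41 v) :=
  CliffordAlgebra.ι_sq_scalar Q41 v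

lemma ι_comm (u v : Fin 5 → ℝ) :
    ι41 u * ι41 v = algebraMap ℝ Cl41 (QuadraticMap.polar Q41 u v) - ι41 v * ι41 u := by
  rw [eq_sub_iff_add_eq]; exact CliffordAlgebra.ι_mul_ι_add_swap u v

lemma ι_anticomm (u v : Fin 5 → ℝ) (h : QuadraticMap.polar Q41 u v = 0) :
    ι41 u * ι41 v = -(ι41 v * ι41 u) := by
  rw [ι_comm, h, map_zero, zero_sub]


/-- In `Cl(4,1)`, for all `a, x ∈ ℝ³`, `T_a · F(x) · T̃_a = F(x + a)`: the
translation `x ↦ x + a` of ℝ³ is implemented multiplicatively by the rotor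
`T_a` on conformal representatives. -/
theorem conformal_translation (lam : ℝ) (hlam : lam ≠ 0) (a x : Fin 3 → ℝ) :
    transRotor lam a * confF lam x * transRotorRev lam a = confF lam (x + a) := by
  set N := ι41 nVec with hNdef
  set Nb := ι41 nBar with hNbdef
  set X := ι41 (emb3 x) with hXdef
  set A := ι41 (emb3 a) with hAdef
  have hemb : ι41 (emb3 (x + a)) = X + A := by
    rw [hXdef, hAdef, ← map_add]
    congr 1
    funext i; fin_cases i <;> simp [emb3]
  -- scalar abbreviations
  set p : ℝ := x 0 * a 0 + x 1 * a 1 + x 2 * a 2 with hp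
  set q : ℝ := ∑ i, a i ^ 2 with hq
  -- commutation relations (parametrized for right-assoc normal forms)
  have polNA : QuadraticMap.polar Q41 nVec (emb3 a) = 0 := by
    rw [polar41]; simp [nVec, emb3]
  have polNX : QuadraticMap.polar Q41 nVec (emb3 x) = 0 := by
    rw [polar41]; simp [nVec, emb3]
  have polNbA : QuadraticMap.polar Q41 nBar (emb3 a) = 0 := by
    rw [polar41]; simp [nBar, emb3]
  have polNbX : QuadraticMap.polar Q41 nBar (emb3 x) = 0 := by
    rw [polar41]; simp [nBar, emb3]
  have polNNb : QuadraticMap.polar Q41 nVec nBar = 4 := by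
    rw [polar41]; simp [nVec, nBar]; norm_num
  have polXA : QuadraticMap.polar Q41 (emb3 x) (emb3 a) = 2 * p := by
    rw [polar41]; simp [emb3, hp]; try ring
  have hQn : Q41 nVec = 0 := by rw [Q41_apply]; simp [nVec]
  have hQnb : Q41 nBar = 0 := by rw [Q41_apply]; simp [nBar]
  have hQa : Q41 (emb3 a) = q := by
    rw [Q41_apply]; simp [emb3, hq, Fin.sum_univ_three]
  -- bare and parametrized rules
  have rAN : A * N = -(N * A) := by
    rw [hAdef, hNdef, ι_anticomm _ _ (by rwa [QuadraticMap.polar_comm])]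
  have rAN' : ∀ z : Cl41, A * (N * z) = -(N * (A * z)) := by
    intro z; rw [← mul_assoc, rAN, ← mul_assoc]; simp
  have rXN : X * N = -(N * X) := by
    rw [hXdef, hNdef, ι_anticomm _ _ (by rwa [QuadraticMap.polar_comm])]
  have rXN' : ∀ z : Cl41, X * (N * z) = -(N * (X * z)) := by
    intro z; rw [← mul_assoc, rXN, ← mul_assoc]; simp
  have rANb : A * Nb = -(Nb * A) := by
    rw [hAdef, hNbdef, ι_anticomm _ _ (by rwa [QuadraticMap.polar_comm])]
  have rANb' : ∀ z : Cl41, A * (Nb * z) = -(Nb * (A * z)) := by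
    intro z; rw [← mul_assoc, rANb, ← mul_assoc]; simp
  have rXNb : X * Nb = -(Nb * X) := by
    rw [hXdef, hNbdef, ι_anticomm _ _ (by rwa [QuadraticMap.polar_comm])]
  have rXNb' : ∀ z : Cl41, X * (Nb * z) = -(Nb * (X * z)) := by
    intro z; rw [← mul_assoc, rXNb, ← mul_assoc]; simp
  have rNbN : Nb * N = (4:ℝ) • (1:Cl41) - N * Nb := by
    rw [hNbdef, hNdef, ι_comm, QuadraticMap.polar_comm, polNNb]
    norm_num [Algebra.algebraMap_eq_smul_one]
  have rNbN' : ∀ z : Cl41, Nb * (N * z) = (4:ℝ) • z - N * (Nb * z) := by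
    intro z; rw [← mul_assoc, rNbN, ← mul_assoc]; simp [sub_mul, smul_mul_assoc]
  have rAX : A * X = (2*p) • (1:Cl41) - X * A := by
    rw [hAdef, hXdef, ι_comm, QuadraticMap.polar_comm, polXA]
    rw [Algebra.algebraMap_eq_smul_one]
  have rAX' : ∀ z : Cl41, A * (X * z) = (2*p) • z - X * (A * z) := by
    intro z; rw [← mul_assoc, rAX, ← mul_assoc]; simp [sub_mul, smul_mul_assoc]
  have rNN : N * N = 0 := by rw [hNdef, ι_sq, hQn, map_zero]
  have rNN' : ∀ z : Cl41, N * (N * z) = 0 := by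
    intro z; rw [← mul_assoc, rNN, zero_mul]
  have rNbNb : Nb * Nb = 0 := by rw [hNbdef, ι_sq, hQnb, map_zero]
  have rNbNb' : ∀ z : Cl41, Nb * (Nb * z) = 0 := by
    intro z; rw [← mul_assoc, rNbNb, zero_mul]
  have rAA : A * A = q • (1:Cl41) := by
    rw [hAdef, ι_sq, hQa, Algebra.algebraMap_eq_smul_one]
  have rAA' : ∀ z : Cl41, A * (A * z) = q • z := by
    intro z; rw [← mul_assoc, rAA, smul_mul_assoc, one_mul]
  have hsum : (∑ i, (x + a) i ^ 2) = (∑ i, x i ^ 2) + 2 * p + q := by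
    simp [Fin.sum_univ_three, hp, hq]; ring
  rw [transRotor, transRotorRev, confF, confF, hemb, hsum]
  rw [← hNdef, ← hNbdef, ← hXdef, ← hAdef]
  simp only [mul_add, add_mul, mul_sub, sub_mul, mul_one, one_mul, mul_assoc,
    smul_mul_assoc, mul_smul_comm, smul_smul, smul_add, smul_sub, smul_neg,
    mul_neg, neg_mul, mul_zero, zero_mul, smul_zero, neg_neg,
    rAN, rAN', rXN, rXN', rANb, rANb', rXNb, rXNb', rNbN, rNbN', rAX, rAX',
    rNN, rNN', rNbNb, rNbNb', rAA, rAA']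
  match_scalars <;> field_simp <;> ring
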